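/- Let U ⊆ ℝ^p be a nonempty convex set, A : ℝ^p → ℝ^m and B : ℝ^p → ℝ^r linear maps, b ∈ ℝ^r, and V = {μ ∈ ℝ^m : there exists η ∈ U with Aη = μ and Bη = b}. Suppose there exists η* in the relative interior of U with Bη* = b, and suppose that η = 0 is the only vector in the recession cone of the set {η ∈ cl(U) : Aη = 0, Bη = b}. Then cl(V) = {μ ∈ ℝ^m : there exists η ∈ cl(U) with Aη = μ and Bη = b}. -/

import Mathlib

open Set Filter Topology

/-- Segment from a point of the closure to a relative interior point lies in the set. -/
lemma segment_mem_of_intrinsicInterior {p : ℕ} {U : Set (Fin p → ℝ)} (hUconv : Convex ℝ U)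
    {y : Fin p → ℝ} (hy : y ∈ intrinsicInterior ℝ U)
    {x : Fin p → ℝ} (hx : x ∈ closure U) {t : ℝ} (ht0 : 0 < t) (ht1 : t ≤ 1) :
    x + t • (y - x) ∈ U := by
  rw [mem_intrinsicInterior] at hy
  obtain ⟨z, hz, rfl⟩ := hy
  have hzU : (z : Fin p → ℝ) ∈ U := by
    have := interior_subset hz; exact this
  have hxspan : x ∈ affineSpan ℝ U :=
    closure_minimal (subset_affineSpan ℝ U)
      (affineSpan ℝ U).closed_of_finiteDimensional hx
  rcases eq_or_lt_of_le ht1 with rfl | htlt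
  · simpa using hzU
  -- get a metric ball around z inside U within the affine span
  obtain ⟨ε, hε, hball⟩ := Metric.mem_nhds_iff.mp (mem_interior_iff_mem_nhds.mp hz)
  have key : ∀ w : Fin p → ℝ, w ∈ affineSpan ℝ U → dist w (z : Fin p → ℝ) < ε → w ∈ U := by
    intro w hw hd
    have : (⟨w, hw⟩ : affineSpan ℝ U) ∈ Metric.ball z ε := by
      simpa [Metric.mem_ball, Subtype.dist_eq] using hd
    exact hball this
  set c : ℝ := (1 - t) / t with hc
  have hcpos : 0 < c := div_pos (by linarith) ht0
  obtain ⟨u, huU, hud⟩ := Metric.mem_closure_iff.mp hx (ε / c) (div_pos hε hcpos)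
  set y' : Fin p → ℝ := c • (x - u) + (z : Fin p → ℝ) with hy'
  have hy'span : y' ∈ affineSpan ℝ U := by
    have := (affineSpan ℝ U).smul_vsub_vadd_mem c hxspan
      (subset_affineSpan ℝ U huU) z.2
    simpa [vsub_eq_sub, vadd_eq_add, hy'] using this
  have hy'U : y' ∈ U := by
    refine key y' hy'span ?_
    have : dist y' (z : Fin p → ℝ) = c * dist x u := by
      simp [hy', dist_eq_norm, norm_smul, abs_of_pos hcpos, dist_eq_norm]
    rw [this]
    calc c * dist x u < c * (ε / c) := by
          exact (mul_lt_mul_iff_right₀ hcpos).mpr hud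
      _ = ε := by field_simp
  have hcombo : (1 - t) • u + t • y' ∈ U :=
    hUconv huU hy'U (by linarith) (le_of_lt ht0) (by ring)
  have htc : t * c = 1 - t := by rw [hc]; field_simp
  have : x + t • ((z : Fin p → ℝ) - x) = (1 - t) • u + t • y' := by
    rw [hy', smul_add, smul_smul, htc]
    module
  rw [this]
  exact hcombo

/-- Recession direction obtained from an unbounded sequence in a closed convex set. -/
lemma recession_of_unbounded {p : ℕ} {S : Set (Fin p → ℝ)} (hScl : IsClosed S)
    (hSconv : Convex ℝ S) {η : ℕ → Fin p → ℝ} (hη : ∀ k, η k ∈ S) {v : Fin p → ℝ}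
    (hnorm : Tendsto (fun k => ‖η k‖) atTop atTop)
    (hv : Tendsto (fun k => ‖η k‖⁻¹ • η k) atTop (𝓝 v))
    {x : Fin p → ℝ} (hx : x ∈ S) {t : ℝ} (ht : 0 ≤ t) : x + t • v ∈ S := by
  set s : ℕ → ℝ := fun k => t * ‖η k‖⁻¹ with hs
  have hinv : Tendsto (fun k => ‖η k‖⁻¹) atTop (𝓝 0) := hnorm.inv_tendsto_atTop
  have hs0 : Tendsto s atTop (𝓝 0) := by
    simpa using hinv.const_mul t
  have hmem : ∀ᶠ k in atTop, x + s k • (η k - x) ∈ S := by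
    filter_upwards [hnorm.eventually_ge_atTop (max t 1)] with k hk
    have hpos : (0:ℝ) < ‖η k‖ := lt_of_lt_of_le (by norm_num : (0:ℝ) < 1) (le_trans (le_max_right _ _) hk)
    have hsk0 : 0 ≤ s k := mul_nonneg ht (inv_nonneg.mpr hpos.le)
    have hsk1 : s k ≤ 1 := by
      have ht' : t ≤ ‖η k‖ := le_trans (le_max_left _ _) hk
      rw [hs]
      simp only []
      rw [← div_eq_mul_inv, div_le_one hpos]
      exact ht'
    have := hSconv hx (hη k) (by linarith : 0 ≤ 1 - s k) hsk0 (by ring)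
    convert this using 1
    module
  have hlim : Tendsto (fun k => x + s k • (η k - x)) atTop (𝓝 (x + t • v)) := by
    have h1 : Tendsto (fun k => s k • (η k - x)) atTop (𝓝 (t • v)) := by
      have heq : ∀ k, s k • (η k - x) = t • (‖η k‖⁻¹ • η k) - s k • x := by
        intro k; rw [hs]; module
      have h2 : Tendsto (fun k => t • (‖η k‖⁻¹ • η k) - s k • x) atTop
          (𝓝 (t • v - (0:ℝ) • x)) := (hv.const_smul t).sub (hs0.smul_const x)
      simpa [heq] using h2
    simpa using (tendsto_const_nhds (x := x)).add h1
  exact hScl.mem_of_tendsto hlim hmem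

/-- Closure of the image of a convex set under a linear map subject to a linear equation:
under a relative-interior (Slater-type) condition and a trivial-recession-cone condition,
`cl(V) = {μ : ∃ η ∈ cl(U), Aη = μ, Bη = b}`. -/
theorem closure_linear_image {p m r : ℕ}
    (U : Set (Fin p → ℝ)) (hUne : U.Nonempty) (hUconv : Convex ℝ U)
    (A : (Fin p → ℝ) →ₗ[ℝ] (Fin m → ℝ)) (B : (Fin p → ℝ) →ₗ[ℝ] (Fin r → ℝ))
    (b : Fin r → ℝ)
    (hri : ∃ η ∈ intrinsicInterior ℝ U, B η = b)
    (hrec : ∀ v : Fin p → ℝ,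
      (∀ x ∈ {η ∈ closure U | A η = 0 ∧ B η = b}, ∀ t : ℝ, 0 ≤ t →
        x + t • v ∈ {η ∈ closure U | A η = 0 ∧ B η = b}) → v = 0) :
    closure {μ : Fin m → ℝ | ∃ η ∈ U, A η = μ ∧ B η = b}
      = {μ : Fin m → ℝ | ∃ η ∈ closure U, A η = μ ∧ B η = b} := by
  have cA : Continuous A := A.continuous_of_finiteDimensional
  have cB : Continuous B := B.continuous_of_finiteDimensional
  -- The constrained closed set
  set S : Set (Fin p → ℝ) := {η ∈ closure U | B η = b} with hSdef
  have hScl : IsClosed S := isClosed_closure.inter (isClosed_singleton.preimage cB)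
  have hSconv : Convex ℝ S := by
    intro a ha c hc α β hα hβ hαβ
    refine ⟨hUconv.closure ha.1 hc.1 hα hβ hαβ, ?_⟩
    simp [map_add, map_smul, ha.2, hc.2, ← add_smul, hαβ]
  apply Subset.antisymm
  · -- closure V ⊆ RHS : RHS is closed and contains V
    apply closure_minimal
    · rintro μ ⟨η, hη, hAη, hBη⟩
      exact ⟨η, subset_closure hη, hAη, hBη⟩
    · apply IsSeqClosed.isClosed
      intro μseq μ hmem hlim
      simp only [mem_setOf_eq] at hmem
      choose η hη1 hη2 hη3 using hmem
      have hηS : ∀ k, η k ∈ S := fun k => ⟨hη1 k, hη3 k⟩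
      by_cases hbd : ∃ M : ℝ, ∃ᶠ k in atTop, ‖η k‖ ≤ M
      · -- bounded subsequence: extract convergent subsequence
        obtain ⟨M, hM⟩ := hbd
        obtain ⟨φ, hφ, hφM⟩ := Filter.extraction_of_frequently_atTop hM
        have hball : ∀ n, η (φ n) ∈ Metric.closedBall 0 M := by
          intro n; simpa [Metric.mem_closedBall, dist_eq_norm] using hφM n
        obtain ⟨etaL, _, ψ, hψ, hψlim⟩ :=
          (isCompact_closedBall (0 : Fin p → ℝ) M).tendsto_subseq hball
        have hsub : Tendsto (fun n => η (φ (ψ n))) atTop (𝓝 etaL) := hψlim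
        have hetaLU : etaL ∈ closure U :=
          isClosed_closure.mem_of_tendsto hsub (Eventually.of_forall fun n => hη1 _)
        have hAseq : Tendsto (fun n => A (η (φ (ψ n)))) atTop (𝓝 (A etaL)) :=
          (cA.tendsto _).comp hsub
        have hAseq' : Tendsto (fun n => A (η (φ (ψ n)))) atTop (𝓝 μ) := by
          have : Tendsto (fun n => μseq (φ (ψ n))) atTop (𝓝 μ) :=
            hlim.comp ((hφ.comp hψ).tendsto_atTop)
          simpa [hη2] using this
        have hBetaL : B etaL = b := by
          have hBseq : Tendsto (fun n => B (η (φ (ψ n)))) atTop (𝓝 (B etaL)) :=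
            (cB.tendsto _).comp hsub
          have : Tendsto (fun _ : ℕ => b) atTop (𝓝 (B etaL)) := by
            simpa [hη3] using hBseq
          exact (tendsto_nhds_unique tendsto_const_nhds this).symm
        exact ⟨etaL, hetaLU, tendsto_nhds_unique hAseq hAseq', hBetaL⟩
      · -- unbounded: derive a nontrivial recession direction, contradiction
        exfalso
        push_neg at hbd
        have hnorm : Tendsto (fun k => ‖η k‖) atTop atTop := by
          refine tendsto_atTop.2 fun M => ?_
          have hev : ∀ᶠ k in atTop, ¬ ‖η k‖ ≤ M := (hbd M).mono fun k hk => not_le.mpr hk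
          filter_upwards [hev] with k hk
          push_neg at hk
          exact hk.le
        set w : ℕ → Fin p → ℝ := fun k => ‖η k‖⁻¹ • η k with hw
        have hwball : ∀ k, w k ∈ Metric.closedBall (0 : Fin p → ℝ) 1 := by
          intro k
          simp only [Metric.mem_closedBall, dist_zero_right, hw, norm_smul, norm_inv, norm_norm]
          rcases eq_or_ne ‖η k‖ 0 with h | h
          · simp [h]
          · rw [inv_mul_cancel₀ h]
        obtain ⟨v, _, φ, hφ, hφlim⟩ :=
          (isCompact_closedBall (0 : Fin p → ℝ) 1).tendsto_subseq hwball
        have hnormφ : Tendsto (fun n => ‖η (φ n)‖) atTop atTop :=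
          hnorm.comp hφ.tendsto_atTop
        have hinv : Tendsto (fun n => ‖η (φ n)‖⁻¹) atTop (𝓝 0) :=
          hnormφ.inv_tendsto_atTop
        -- ‖v‖ = 1
        have hv1 : ‖v‖ = 1 := by
          have h1 : Tendsto (fun n => ‖w (φ n)‖) atTop (𝓝 ‖v‖) :=
            (continuous_norm.tendsto _).comp hφlim
          have h2 : ∀ᶠ n in atTop, ‖w (φ n)‖ = 1 := by
            filter_upwards [hnormφ.eventually_ge_atTop 1] with n hn
            have hpos : ‖η (φ n)‖ ≠ 0 := by positivity
            simp [hw, norm_smul, norm_inv, norm_norm, inv_mul_cancel₀ hpos]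
          have : Tendsto (fun _ : ℕ => (1:ℝ)) atTop (𝓝 ‖v‖) := h1.congr' h2
          exact tendsto_nhds_unique this tendsto_const_nhds
        -- A v = 0
        have hAv : A v = 0 := by
          have h1 : Tendsto (fun n => A (w (φ n))) atTop (𝓝 (A v)) :=
            (cA.tendsto _).comp hφlim
          have heq : ∀ n, A (w (φ n)) = ‖η (φ n)‖⁻¹ • μseq (φ n) := by
            intro n; simp [hw, map_smul, hη2]
          have hμφ : Tendsto (fun n => μseq (φ n)) atTop (𝓝 μ) :=
            hlim.comp hφ.tendsto_atTop
          have h2 : Tendsto (fun n => ‖η (φ n)‖⁻¹ • μseq (φ n)) atTop (𝓝 ((0:ℝ) • μ)) :=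
            hinv.smul hμφ
          rw [zero_smul] at h2
          exact tendsto_nhds_unique h1 (by simpa [heq] using h2)
        -- B v = 0
        have hBv : B v = 0 := by
          have h1 : Tendsto (fun n => B (w (φ n))) atTop (𝓝 (B v)) :=
            (cB.tendsto _).comp hφlim
          have heq : ∀ n, B (w (φ n)) = ‖η (φ n)‖⁻¹ • b := by
            intro n; simp [hw, map_smul, hη3]
          have h2 : Tendsto (fun n => ‖η (φ n)‖⁻¹ • b) atTop (𝓝 ((0:ℝ) • b)) :=
            hinv.smul_const b
          rw [zero_smul] at h2
          exact tendsto_nhds_unique h1 (by simpa [heq] using h2)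
        -- v is a recession direction of the constrained zero set
        have hv0 : v = 0 := by
          apply hrec
          rintro x ⟨hxU, hxA, hxB⟩ t ht
          have hxS : x ∈ S := ⟨hxU, hxB⟩
          have hmemS : x + t • v ∈ S :=
            recession_of_unbounded hScl hSconv (fun n => hηS (φ n)) hnormφ hφlim hxS ht
          exact ⟨hmemS.1, by simp [map_add, map_smul, hxA, hAv], hmemS.2⟩
        rw [hv0] at hv1
        simp at hv1
  · -- RHS ⊆ closure V
    rintro μ ⟨x, hx, hAx, hBx⟩
    obtain ⟨y, hy, hBy⟩ := hri
    set tseq : ℕ → ℝ := fun k => ((k : ℝ) + 1)⁻¹ with htseq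
    have ht0 : ∀ k, 0 < tseq k := fun k => by positivity
    have ht1 : ∀ k, tseq k ≤ 1 := by
      intro k
      rw [htseq]
      rw [inv_le_one_iff₀]
      right
      simp [Nat.cast_nonneg]
    have hmem : ∀ k, A (x + tseq k • (y - x)) ∈
        {μ : Fin m → ℝ | ∃ η ∈ U, A η = μ ∧ B η = b} := by
      intro k
      refine ⟨x + tseq k • (y - x), segment_mem_of_intrinsicInterior hUconv hy hx
        (ht0 k) (ht1 k), rfl, ?_⟩
      simp [map_add, map_smul, map_sub, hBy, hBx]
    have htlim : Tendsto tseq atTop (𝓝 0) := by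
      simpa [htseq, one_div] using tendsto_one_div_add_atTop_nhds_zero_nat (𝕜 := ℝ)
    have hxlim : Tendsto (fun k => x + tseq k • (y - x)) atTop (𝓝 x) := by
      have : Tendsto (fun k => tseq k • (y - x)) atTop (𝓝 ((0:ℝ) • (y - x))) :=
        htlim.smul_const (y - x)
      rw [zero_smul] at this
      simpa using (tendsto_const_nhds (x := x)).add this
    have hAlim : Tendsto (fun k => A (x + tseq k • (y - x))) atTop (𝓝 μ) := by
      have h := (cA.tendsto x).comp hxlim
      rw [hAx] at h
      exact h
    exact mem_closure_of_tendsto hAlim (Eventually.of_forall hmem)
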